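/- Let m : (0,∞) → ℝ be continuous and positive with 0 < m⁻ ≤ t·m(t)/M(t) ≤ m⁺ for all t > 0, where M(t) = ∫₀ᵗ m(s)ds. Then for all a, b ≥ 0: min{a^{m⁻}, a^{m⁺}} · M(b) ≤ M(a·b) ≤ max{a^{m⁻}, a^{m⁺}} · M(b). -/

import Mathlib

open Filter Set

theorem M_min_max_bounds
    (m M : ℝ → ℝ) (mm mp : ℝ)
    (hmcont : ContinuousOn m (Set.Ioi 0))
    (hmpos : ∀ t > (0:ℝ), 0 < m t)
    (hM : ∀ t, M t = ∫ τ in (0:ℝ)..t, m τ)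
    (hmm : 0 < mm) (hmmp : mm ≤ mp)
    (hstruct : ∀ t > (0:ℝ), mm ≤ t * m t / M t ∧ t * m t / M t ≤ mp) :
    ∀ a b : ℝ, 0 ≤ a → 0 ≤ b →
      min (a ^ mm) (a ^ mp) * M b ≤ M (a * b) ∧
      M (a * b) ≤ max (a ^ mm) (a ^ mp) * M b := by
  have hMpos : ∀ t > (0:ℝ), 0 < M t := by
    intro t ht
    by_contra h
    push_neg at h
    have h1 := (hstruct t ht).1
    have h2 : t * m t / M t ≤ 0 :=
      div_nonpos_of_nonneg_of_nonpos (le_of_lt (mul_pos ht (hmpos t ht))) h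
    linarith
  have hMne : ∀ t > (0:ℝ), M t ≠ 0 := fun t ht => ne_of_gt (hMpos t ht)
  have hInt : ∀ t > (0:ℝ), IntervalIntegrable m MeasureTheory.volume 0 t := by
    intro t ht
    by_contra h
    have : M t = 0 := by rw [hM t, intervalIntegral.integral_undef h]
    exact (hMne t ht) this
  have hderiv : ∀ t > (0:ℝ), HasDerivAt M (m t) t := by
    intro t ht
    have hmeas : StronglyMeasurableAtFilter m (nhds t) :=
      hmcont.stronglyMeasurableAtFilter isOpen_Ioi _ ht
    have hc : ContinuousAt m t := hmcont.continuousAt (isOpen_Ioi.mem_nhds ht)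
    have hd := intervalIntegral.integral_hasDerivAt_right (hInt t ht) hmeas hc
    have hMeq : M = fun u => ∫ x in (0:ℝ)..u, m x := funext hM
    rw [hMeq]
    exact hd
  set L : ℝ → ℝ := fun t => Real.log (M t) - mp * Real.log t with hLdef
  set K : ℝ → ℝ := fun t => Real.log (M t) - mm * Real.log t with hKdef
  have hlogd : ∀ t > (0:ℝ), HasDerivAt (fun u => Real.log (M u)) (m t / M t) t := by
    intro t ht
    have := (Real.hasDerivAt_log (hMne t ht)).comp t (hderiv t ht)
    simpa [div_eq_inv_mul, Function.comp_def] using this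
  have hLd : ∀ t > (0:ℝ), HasDerivAt L (m t / M t - mp / t) t := by
    intro t ht
    have h2 : HasDerivAt (fun u => mp * Real.log u) (mp * t⁻¹) t :=
      (Real.hasDerivAt_log (ne_of_gt ht)).const_mul mp
    rw [div_eq_mul_inv mp t]
    exact (hlogd t ht).sub h2
  have hKd : ∀ t > (0:ℝ), HasDerivAt K (m t / M t - mm / t) t := by
    intro t ht
    have h2 : HasDerivAt (fun u => mm * Real.log u) (mm * t⁻¹) t :=
      (Real.hasDerivAt_log (ne_of_gt ht)).const_mul mm
    rw [div_eq_mul_inv mm t]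
    exact (hlogd t ht).sub h2
  have hLanti : AntitoneOn L (Set.Ioi 0) := by
    apply antitoneOn_of_deriv_nonpos (convex_Ioi 0)
    · exact fun x hx => ((hLd x hx).continuousAt).continuousWithinAt
    · rw [interior_Ioi]
      exact fun x hx => ((hLd x hx).differentiableAt).differentiableWithinAt
    · rw [interior_Ioi]
      intro x hx
      rw [(hLd x hx).deriv]
      have hx' : (0:ℝ) < x := hx
      have hMx := hMpos x hx
      have h2 : x * m x ≤ mp * M x := (div_le_iff₀ hMx).1 (hstruct x hx).2
      have h3 : m x / M x ≤ mp / x := by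
        rw [div_le_div_iff₀ hMx hx']
        nlinarith
      linarith
  have hKmono : MonotoneOn K (Set.Ioi 0) := by
    apply monotoneOn_of_deriv_nonneg (convex_Ioi 0)
    · exact fun x hx => ((hKd x hx).continuousAt).continuousWithinAt
    · rw [interior_Ioi]
      exact fun x hx => ((hKd x hx).differentiableAt).differentiableWithinAt
    · rw [interior_Ioi]
      intro x hx
      rw [(hKd x hx).deriv]
      have hx' : (0:ℝ) < x := hx
      have hMx := hMpos x hx
      have h2 : mm * M x ≤ x * m x := (le_div_iff₀ hMx).1 (hstruct x hx).1
      have h3 : mm / x ≤ m x / M x := by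
        rw [div_le_div_iff₀ hx' hMx]
        nlinarith
      linarith
  have key : ∀ s t : ℝ, 0 < s → s ≤ t →
      (t/s) ^ mm * M s ≤ M t ∧ M t ≤ (t/s) ^ mp * M s := by
    intro s t hs hst
    have ht : (0:ℝ) < t := lt_of_lt_of_le hs hst
    have hLle : L t ≤ L s := hLanti (mem_Ioi.2 hs) (mem_Ioi.2 ht) hst
    have hKle : K s ≤ K t := hKmono (mem_Ioi.2 hs) (mem_Ioi.2 ht) hst
    have hts : (0:ℝ) < t / s := div_pos ht hs
    have hMs := hMpos s hs
    have hMt := hMpos t ht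
    constructor
    · rw [← Real.log_le_log_iff (by positivity) hMt,
        Real.log_mul (by positivity) (hMne s hs), Real.log_rpow hts,
        Real.log_div (ne_of_gt ht) (ne_of_gt hs)]
      have e : mm * (Real.log t - Real.log s) = mm * Real.log t - mm * Real.log s := by ring
      rw [e]
      simp only [hKdef] at hKle
      linarith
    · rw [← Real.log_le_log_iff hMt (by positivity),
        Real.log_mul (by positivity) (hMne s hs), Real.log_rpow hts,
        Real.log_div (ne_of_gt ht) (ne_of_gt hs)]
      have e : mp * (Real.log t - Real.log s) = mp * Real.log t - mp * Real.log s := by ring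
      rw [e]
      simp only [hLdef] at hLle
      linarith
  intro a b ha hb
  rcases eq_or_lt_of_le hb with hb0 | hbpos
  · have hM0 : M 0 = 0 := by rw [hM]; simp
    rw [← hb0, mul_zero, hM0, mul_zero, mul_zero]
    exact ⟨le_refl 0, le_refl 0⟩
  rcases eq_or_lt_of_le ha with ha0 | hapos
  · have hM0 : M 0 = 0 := by rw [hM]; simp
    rw [← ha0, zero_mul, hM0, Real.zero_rpow (ne_of_gt hmm),
      Real.zero_rpow (ne_of_gt (lt_of_lt_of_le hmm hmmp))]
    simp
  rcases le_or_gt 1 a with h1a | ha1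
  · have hk := key b (a*b) hbpos (le_mul_of_one_le_left hb h1a)
    have hab : a * b / b = a := by field_simp
    rw [hab] at hk
    have hmmle : a ^ mm ≤ a ^ mp := Real.rpow_le_rpow_of_exponent_le h1a hmmp
    rw [min_eq_left hmmle, max_eq_right hmmle]
    exact hk
  · have hk := key (a*b) b (mul_pos hapos hbpos) (mul_le_of_le_one_left hb (le_of_lt ha1))
    have hab : b / (a*b) = a⁻¹ := by field_simp
    rw [hab] at hk
    obtain ⟨h1, h2⟩ := hk
    have hpmm : 0 < a ^ mm := Real.rpow_pos_of_pos hapos mm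
    have hpmp : 0 < a ^ mp := Real.rpow_pos_of_pos hapos mp
    have hle : a ^ mp ≤ a ^ mm :=
      Real.rpow_le_rpow_of_exponent_ge hapos (le_of_lt ha1) hmmp
    rw [min_eq_right hle, max_eq_left hle]
    rw [Real.inv_rpow ha] at h1 h2
    constructor
    · calc a ^ mp * M b ≤ a ^ mp * ((a ^ mp)⁻¹ * M (a*b)) :=
            mul_le_mul_of_nonneg_left h2 (le_of_lt hpmp)
        _ = M (a*b) := by field_simp
    · calc M (a*b) = a ^ mm * ((a ^ mm)⁻¹ * M (a*b)) := by field_simp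
        _ ≤ a ^ mm * M b := mul_le_mul_of_nonneg_left h1 (le_of_lt hpmm)
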